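/- Over an algebraically closed field k of characteristic ≠ 2, the singular locus of the hypersurface Z(P₃) ⊂ A⁶ of non-semiregular ternary quadratic forms, where P₃ = 4ζ₁ζ₂ζ₃ + ζ₁₂ζ₁₃ζ₂₃ − (ζ₁ζ₂₃² + ζ₂ζ₁₃² + ζ₃ζ₁₂²), consists exactly of those points at which all partial derivatives of P₃ vanish, and this set equals the set of quadratic forms that are squares of linear forms. -/

import Mathlib

noncomputable section

open MvPolynomial

/-- The polynomial `P₃` whose vanishing defines non-semiregular ternary forms;
variables `0,1,2 ↦ ζ₁,ζ₂,ζ₃` and `3,4,5 ↦ ζ₁₂,ζ₁₃,ζ₂₃`. -/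
def P₃ (k : Type*) [CommRing k] : MvPolynomial (Fin 6) k :=
  4 * X 0 * X 1 * X 2 + X 3 * X 4 * X 5
    - (X 0 * X 5 ^ 2 + X 1 * X 4 ^ 2 + X 2 * X 3 ^ 2)

lemma pderiv_four' {k : Type*} [CommRing k] (i : Fin 6) :
    pderiv i (4 : MvPolynomial (Fin 6) k) = 0 := by
  rw [show (4 : MvPolynomial (Fin 6) k) = C 4 from (map_ofNat C 4).symm]; exact pderiv_C

-- E: the six equations
lemma E_iff_square {k : Type*} [Field k] [IsAlgClosed k] (h2 : (2 : k) ≠ 0)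
    (lam : Fin 6 → k)
    (hE : lam 3 ^ 2 = 4 * lam 0 * lam 1 ∧ lam 4 ^ 2 = 4 * lam 0 * lam 2 ∧
          lam 5 ^ 2 = 4 * lam 1 * lam 2 ∧ lam 4 * lam 5 = 2 * lam 2 * lam 3 ∧
          lam 3 * lam 5 = 2 * lam 1 * lam 4 ∧ lam 3 * lam 4 = 2 * lam 0 * lam 5) :
    ∃ a b c : k, ∀ x : Fin 3 → k,
      lam 0 * x 0 ^ 2 + lam 1 * x 1 ^ 2 + lam 2 * x 2 ^ 2
        + lam 3 * x 0 * x 1 + lam 4 * x 0 * x 2 + lam 5 * x 1 * x 2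
      = (a * x 0 + b * x 1 + c * x 2) ^ 2 := by
  obtain ⟨e1, e2, e3, e4, e5, e6⟩ := hE
  -- helper to finish given the six coefficient identities
  have finish : ∀ a b c : k, a ^ 2 = lam 0 → b ^ 2 = lam 1 → c ^ 2 = lam 2 →
      2 * a * b = lam 3 → 2 * a * c = lam 4 → 2 * b * c = lam 5 →
      ∃ a b c : k, ∀ x : Fin 3 → k,
        lam 0 * x 0 ^ 2 + lam 1 * x 1 ^ 2 + lam 2 * x 2 ^ 2
          + lam 3 * x 0 * x 1 + lam 4 * x 0 * x 2 + lam 5 * x 1 * x 2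
        = (a * x 0 + b * x 1 + c * x 2) ^ 2 := by
    intro a b c p1 p2 p3 p4 p5 p6
    exact ⟨a, b, c, fun x => by
      linear_combination (x 0) ^ 2 * p1.symm + (x 1) ^ 2 * p2.symm + (x 2) ^ 2 * p3.symm
        + (x 0) * (x 1) * p4.symm + (x 0) * (x 2) * p5.symm + (x 1) * (x 2) * p6.symm⟩
  by_cases h0 : lam 0 ≠ 0
  · obtain ⟨a, ha⟩ := IsAlgClosed.exists_pow_nat_eq (lam 0) zero_lt_two
    have ha0 : a ≠ 0 := by rintro rfl; simp at ha; exact h0 ha.symm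
    refine finish a (lam 3 / (2 * a)) (lam 4 / (2 * a)) ha ?_ ?_ ?_ ?_ ?_
    · field_simp; linear_combination e1 - 4 * lam 1 * ha
    · field_simp; linear_combination e2 - 4 * lam 2 * ha
    · field_simp <;> ring
    · field_simp <;> ring
    · field_simp; linear_combination e6 - 2 * lam 5 * ha
  push_neg at h0
  by_cases h1 : lam 1 ≠ 0
  · obtain ⟨b, hb⟩ := IsAlgClosed.exists_pow_nat_eq (lam 1) zero_lt_two
    have hb0 : b ≠ 0 := by rintro rfl; simp at hb; exact h1 hb.symm
    refine finish (lam 3 / (2 * b)) b (lam 5 / (2 * b)) ?_ hb ?_ ?_ ?_ ?_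
    · field_simp; linear_combination e1 - 4 * lam 0 * hb
    · field_simp; linear_combination e3 - 4 * lam 2 * hb
    · field_simp <;> ring
    · field_simp; linear_combination e5 - 2 * lam 4 * hb
    · field_simp <;> ring
  push_neg at h1
  by_cases hc2 : lam 2 ≠ 0
  · obtain ⟨c, hc⟩ := IsAlgClosed.exists_pow_nat_eq (lam 2) zero_lt_two
    have hc0 : c ≠ 0 := by rintro rfl; simp at hc; exact hc2 hc.symm
    refine finish (lam 4 / (2 * c)) (lam 5 / (2 * c)) c ?_ ?_ hc ?_ ?_ ?_
    · field_simp; linear_combination e2 - 4 * lam 0 * hc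
    · field_simp; linear_combination e3 - 4 * lam 1 * hc
    · field_simp; linear_combination e4 - 2 * lam 3 * hc
    · field_simp <;> ring
    · field_simp <;> ring
  push_neg at hc2
  have l3 : lam 3 = 0 := by
    have : lam 3 ^ 2 = 0 := by rw [e1, h0]; ring
    exact pow_eq_zero_iff (by norm_num) |>.mp this
  have l4 : lam 4 = 0 := by
    have : lam 4 ^ 2 = 0 := by rw [e2, h0]; ring
    exact pow_eq_zero_iff (by norm_num) |>.mp this
  have l5 : lam 5 = 0 := by
    have : lam 5 ^ 2 = 0 := by rw [e3, h1]; ring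
    exact pow_eq_zero_iff (by norm_num) |>.mp this
  exact finish 0 0 0 (by rw [h0]; ring) (by rw [h1]; ring) (by rw [hc2]; ring)
    (by rw [l3]; ring) (by rw [l4]; ring) (by rw [l5]; ring)

/-- Over an algebraically closed field of characteristic ≠ 2, all six partial derivatives of
`P₃` vanish at a point (λᵢ, λᵢⱼ) iff the corresponding ternary quadratic form is the square
of a linear form, iff all 2×2 minors of the symmetric matrix of its bilinear form vanish. -/
theorem singular_locus_P₃ {k : Type*} [Field k] [IsAlgClosed k] (h2 : (2 : k) ≠ 0)
    (lam : Fin 6 → k) (S : Matrix (Fin 3) (Fin 3) k)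
    (hS : S = !![2 * lam 0, lam 3, lam 4;
                 lam 3, 2 * lam 1, lam 5;
                 lam 4, lam 5, 2 * lam 2]) :
    ((∀ i : Fin 6, eval lam (pderiv i (P₃ k)) = 0)
      ↔ ∃ a b c : k, ∀ x : Fin 3 → k,
          lam 0 * x 0 ^ 2 + lam 1 * x 1 ^ 2 + lam 2 * x 2 ^ 2
            + lam 3 * x 0 * x 1 + lam 4 * x 0 * x 2 + lam 5 * x 1 * x 2
          = (a * x 0 + b * x 1 + c * x 2) ^ 2)
    ∧ ((∃ a b c : k, ∀ x : Fin 3 → k,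
          lam 0 * x 0 ^ 2 + lam 1 * x 1 ^ 2 + lam 2 * x 2 ^ 2
            + lam 3 * x 0 * x 1 + lam 4 * x 0 * x 2 + lam 5 * x 1 * x 2
          = (a * x 0 + b * x 1 + c * x 2) ^ 2)
      ↔ ∀ i j i' j' : Fin 3, S i j * S i' j' - S i j' * S i' j = 0) := by
  -- the six explicit derivative values
  have d0 : eval lam (pderiv 0 (P₃ k)) = 4 * lam 1 * lam 2 - lam 5 ^ 2 := by
    simp [P₃, pderiv_four'] <;> ring
  have d1 : eval lam (pderiv 1 (P₃ k)) = 4 * lam 0 * lam 2 - lam 4 ^ 2 := by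
    simp [P₃, pderiv_four'] <;> ring
  have d2 : eval lam (pderiv 2 (P₃ k)) = 4 * lam 0 * lam 1 - lam 3 ^ 2 := by
    simp [P₃, pderiv_four'] <;> ring
  have d3 : eval lam (pderiv 3 (P₃ k)) = lam 4 * lam 5 - 2 * lam 2 * lam 3 := by
    simp [P₃, pderiv_four'] <;> ring
  have d4 : eval lam (pderiv 4 (P₃ k)) = lam 3 * lam 5 - 2 * lam 1 * lam 4 := by
    simp [P₃, pderiv_four'] <;> ring
  have d5 : eval lam (pderiv 5 (P₃ k)) = lam 3 * lam 4 - 2 * lam 0 * lam 5 := by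
    simp [P₃, pderiv_four'] <;> ring
  set E : Prop := lam 3 ^ 2 = 4 * lam 0 * lam 1 ∧ lam 4 ^ 2 = 4 * lam 0 * lam 2 ∧
          lam 5 ^ 2 = 4 * lam 1 * lam 2 ∧ lam 4 * lam 5 = 2 * lam 2 * lam 3 ∧
          lam 3 * lam 5 = 2 * lam 1 * lam 4 ∧ lam 3 * lam 4 = 2 * lam 0 * lam 5 with hEdef
  have hDE : (∀ i : Fin 6, eval lam (pderiv i (P₃ k)) = 0) ↔ E := by
    rw [hEdef]
    constructor
    · intro h
      have h0 := h 0; have h1 := h 1; have h2' := h 2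
      have h3 := h 3; have h4 := h 4; have h5 := h 5
      rw [d0] at h0; rw [d1] at h1; rw [d2] at h2'
      rw [d3] at h3; rw [d4] at h4; rw [d5] at h5
      refine ⟨by linear_combination -h2', by linear_combination -h1,
        by linear_combination -h0, by linear_combination h3,
        by linear_combination h4, by linear_combination h5⟩
    · rintro ⟨e1, e2, e3, e4, e5, e6⟩ i
      fin_cases i
      · show eval lam (pderiv (0 : Fin 6) (P₃ k)) = 0
        rw [d0]; linear_combination -e3
      · show eval lam (pderiv (1 : Fin 6) (P₃ k)) = 0
        rw [d1]; linear_combination -e2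
      · show eval lam (pderiv (2 : Fin 6) (P₃ k)) = 0
        rw [d2]; linear_combination -e1
      · show eval lam (pderiv (3 : Fin 6) (P₃ k)) = 0
        rw [d3]; linear_combination e4
      · show eval lam (pderiv (4 : Fin 6) (P₃ k)) = 0
        rw [d4]; linear_combination e5
      · show eval lam (pderiv (5 : Fin 6) (P₃ k)) = 0
        rw [d5]; linear_combination e6
  have hSq : (∃ a b c : k, ∀ x : Fin 3 → k,
          lam 0 * x 0 ^ 2 + lam 1 * x 1 ^ 2 + lam 2 * x 2 ^ 2
            + lam 3 * x 0 * x 1 + lam 4 * x 0 * x 2 + lam 5 * x 1 * x 2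
          = (a * x 0 + b * x 1 + c * x 2) ^ 2) ↔ E := by
    rw [hEdef]
    constructor
    · rintro ⟨a, b, c, h⟩
      have q0 := h ![1, 0, 0]
      have q1 := h ![0, 1, 0]
      have q2 := h ![0, 0, 1]
      have q3 := h ![1, 1, 0]
      have q4 := h ![1, 0, 1]
      have q5 := h ![0, 1, 1]
      simp at q0 q1 q2 q3 q4 q5
      have r0 : lam 0 = a ^ 2 := by linear_combination q0
      have r1 : lam 1 = b ^ 2 := by linear_combination q1
      have r2 : lam 2 = c ^ 2 := by linear_combination q2
      have r3 : lam 3 = 2 * a * b := by linear_combination q3 - q0 - q1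
      have r4 : lam 4 = 2 * a * c := by linear_combination q4 - q0 - q2
      have r5 : lam 5 = 2 * b * c := by linear_combination q5 - q1 - q2
      refine ⟨?_, ?_, ?_, ?_, ?_, ?_⟩ <;> simp only [r0, r1, r2, r3, r4, r5] <;> ring
    · exact E_iff_square h2 lam
  have hME : (∀ i j i' j' : Fin 3, S i j * S i' j' - S i j' * S i' j = 0) → E := by
    intro h
    rw [hEdef]
    have m1 := h 0 0 1 1
    have m2 := h 0 0 2 2
    have m3 := h 1 1 2 2
    have m4 := h 1 0 2 2
    have m5 := h 0 1 1 2
    have m6 := h 0 0 1 2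
    simp [hS] at m1 m2 m3 m4 m5 m6
    exact ⟨by linear_combination -m1, by linear_combination -m2,
      by linear_combination -m3, by linear_combination -m4,
      by linear_combination m5, by linear_combination -m6⟩
  refine ⟨hDE.trans hSq.symm, ⟨?_, fun h => hSq.mpr (hME h)⟩⟩
  rintro ⟨a, b, c, h⟩ i j i' j'
  have q0 := h ![1, 0, 0]
  have q1 := h ![0, 1, 0]
  have q2 := h ![0, 0, 1]
  have q3 := h ![1, 1, 0]
  have q4 := h ![1, 0, 1]
  have q5 := h ![0, 1, 1]
  simp at q0 q1 q2 q3 q4 q5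
  have r0 : lam 0 = a ^ 2 := by linear_combination q0
  have r1 : lam 1 = b ^ 2 := by linear_combination q1
  have r2 : lam 2 = c ^ 2 := by linear_combination q2
  have r3 : lam 3 = 2 * a * b := by linear_combination q3 - q0 - q1
  have r4 : lam 4 = 2 * a * c := by linear_combination q4 - q0 - q2
  have r5 : lam 5 = 2 * b * c := by linear_combination q5 - q1 - q2
  have hW : ∀ i j : Fin 3, S i j = 2 * (![a, b, c] i) * (![a, b, c] j) := by
    intro i j
    fin_cases i <;> fin_cases j <;>
      simp [hS, r0, r1, r2, r3, r4, r5] <;> ring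
  rw [hW i j, hW i' j', hW i j', hW i' j]
  ring
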